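/- Let a < b < c be real numbers. The lines ℓ_A : y = (a + (b + c)/2)x − a(b + c)/2 and ℓ_C : y = (c + (a + b)/2)x − c(a + b)/2 (the DA bisectors of the interior angles at A = (a,a²) and C = (c,c²) of the triangle inscribed in y = x²) intersect in a unique point, and the first coordinate of this point equals b. Hence the intersection lies on the vertical line x = b, which is the DA bisector of the negative interior angle at B = (b,b²); consequently the three interior DA angle bisectors of the triangle concur at a single finite point (the DA incenter). -/
import Mathlib


/-- DA incenter: for `a < b < c`, the DA bisectors
`ℓ_A : y = (a + (b+c)/2)x − a(b+c)/2` and `ℓ_C : y = (c + (a+b)/2)x − c(a+b)/2`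
meet in a unique point, whose first coordinate is `b`; hence it lies on the vertical
bisector `x = b` of the negative angle at `B`, so the three DA bisectors concur. -/
theorem da_incenter_exists (a b c : ℝ) (hab : a < b) (hbc : b < c) :
    (∃! P : ℝ × ℝ,
        P.2 = (a + (b + c) / 2) * P.1 - a * (b + c) / 2 ∧
        P.2 = (c + (a + b) / 2) * P.1 - c * (a + b) / 2) ∧
    ∀ P : ℝ × ℝ,
      P.2 = (a + (b + c) / 2) * P.1 - a * (b + c) / 2 →
      P.2 = (c + (a + b) / 2) * P.1 - c * (a + b) / 2 →
      P.1 = b := by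
  have hac : a < c := hab.trans hbc
  have key : ∀ P : ℝ × ℝ,
      P.2 = (a + (b + c) / 2) * P.1 - a * (b + c) / 2 →
      P.2 = (c + (a + b) / 2) * P.1 - c * (a + b) / 2 →
      P.1 = b := by
    intro P h1 h2
    have h3 : (a - c) / 2 * P.1 = (a - c) / 2 * b := by nlinarith [h1, h2]
    exact mul_left_cancel₀ (ne_of_lt (by linarith : (a - c) / 2 < 0)) h3
  refine ⟨⟨(b, (a + (b + c) / 2) * b - a * (b + c) / 2), ⟨rfl, by ring⟩, ?_⟩, key⟩
  rintro ⟨x, y⟩ ⟨h1, h2⟩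
  have hx : x = b := key (x, y) h1 h2
  subst hx
  exact Prod.ext rfl h1
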